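/- Let V : [r,R]² → ℝ² be continuous, V = (V₁,V₂), with r < R, such that V₁(r,s) > 0 and V₂(t,r) > 0 for all t,s ∈ [r,R], and V₁(R,s) < 0 and V₂(t,R) < 0 for all t,s ∈ [r,R]. Then there exists (t₀,s₀) ∈ (r,R)² with V(t₀,s₀) = (0,0). -/

import Mathlib

open Real in
lemma aux_floor_sin {u v : ℝ} (huv : u ≤ v) {φ : ℝ → ℝ}
    (hφ : ContinuousOn φ (Set.Icc u v))
    (h : ∀ t ∈ Set.Icc u v, Real.sin (φ t) ≠ 0) :
    ⌊φ u / π⌋ = ⌊φ v / π⌋ := by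
  by_contra hne
  rcases lt_or_gt_of_ne hne with hlt | hlt
  · set k := ⌊φ v / π⌋ with hk
    have h1 : φ u < k * π := by
      have : φ u < (⌊φ u / π⌋ + 1) * π := by
        have := Int.lt_floor_add_one (φ u / π)
        have hπ := Real.pi_pos
        rw [div_lt_iff₀ hπ] at this
        push_cast
        linarith
      have h2 : ((⌊φ u / π⌋ : ℝ) + 1) ≤ (k : ℝ) := by
        have : (⌊φ u / π⌋ + 1 : ℤ) ≤ k := hlt
        exact_mod_cast this
      nlinarith [Real.pi_pos]
    have h2 : (k : ℝ) * π ≤ φ v := by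
      have := Int.floor_le (φ v / π)
      have hπ := Real.pi_pos
      rw [le_div_iff₀ hπ] at this
      linarith
    obtain ⟨t, ht, hft⟩ := intermediate_value_Icc huv hφ ⟨le_of_lt h1, h2⟩
    exact h t ht (by rw [hft]; exact Real.sin_int_mul_pi k)
  · set k := ⌊φ u / π⌋ with hk
    have h1 : φ v < k * π := by
      have : φ v < (⌊φ v / π⌋ + 1) * π := by
        have := Int.lt_floor_add_one (φ v / π)
        have hπ := Real.pi_pos
        rw [div_lt_iff₀ hπ] at this
        push_cast
        linarith
      have h2 : ((⌊φ v / π⌋ : ℝ) + 1) ≤ (k : ℝ) := by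
        have : (⌊φ v / π⌋ + 1 : ℤ) ≤ k := hlt
        exact_mod_cast this
      nlinarith [Real.pi_pos]
    have h2 : (k : ℝ) * π ≤ φ u := by
      have := Int.floor_le (φ u / π)
      have hπ := Real.pi_pos
      rw [le_div_iff₀ hπ] at this
      linarith
    obtain ⟨t, ht, hft⟩ := intermediate_value_Icc' huv hφ ⟨le_of_lt h1, h2⟩
    exact h t ht (by rw [hft]; exact Real.sin_int_mul_pi k)

open Real in
lemma aux_even_floor_of_sin_pos {t : ℝ} (h : 0 < Real.sin t) : Even ⌊t / π⌋ := by
  by_contra hodd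
  rw [Int.not_even_iff_odd] at hodd
  set m := ⌊t / π⌋ with hm
  have hρ1 : 0 ≤ t - m * π := by
    have := Int.floor_le (t / π); rw [le_div_iff₀ Real.pi_pos] at this; linarith
  have hρ2 : t - m * π < π := by
    have := Int.lt_floor_add_one (t / π); rw [div_lt_iff₀ Real.pi_pos] at this
    push_cast at this ⊢; linarith
  have hs : Real.sin (t - m * π + m * π) = (-1) ^ m * Real.sin (t - m * π) :=
    Real.sin_add_int_mul_pi _ m
  rw [sub_add_cancel, Odd.neg_one_zpow hodd] at hs
  have : 0 ≤ Real.sin (t - m * π) := Real.sin_nonneg_of_nonneg_of_le_pi hρ1 hρ2.le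
  nlinarith

open Real in
lemma aux_odd_floor_of_sin_neg {t : ℝ} (h : Real.sin t < 0) : Odd ⌊t / π⌋ := by
  by_contra heven
  rw [Int.not_odd_iff_even] at heven
  set m := ⌊t / π⌋ with hm
  have hρ1 : 0 ≤ t - m * π := by
    have := Int.floor_le (t / π); rw [le_div_iff₀ Real.pi_pos] at this; linarith
  have hρ2 : t - m * π < π := by
    have := Int.lt_floor_add_one (t / π); rw [div_lt_iff₀ Real.pi_pos] at this
    push_cast at this ⊢; linarith
  have hs : Real.sin (t - m * π + m * π) = (-1) ^ m * Real.sin (t - m * π) :=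
    Real.sin_add_int_mul_pi _ m
  rw [sub_add_cancel, Even.neg_one_zpow heven] at hs
  have : 0 ≤ Real.sin (t - m * π) := Real.sin_nonneg_of_nonneg_of_le_pi hρ1 hρ2.le
  nlinarith

open Real in
lemma aux_floor_half_bounds (t : ℝ) :
    ⌊t / π⌋ ≤ ⌊(t + π / 2) / π⌋ ∧ ⌊(t + π / 2) / π⌋ ≤ ⌊t / π⌋ + 1 := by
  have hπ := Real.pi_pos
  constructor
  · exact Int.floor_le_floor (by gcongr; linarith)
  · have : (t + π / 2) / π ≤ t / π + 1 := by
      rw [div_le_iff₀ hπ, add_mul, div_mul_cancel₀ _ hπ.ne', one_mul]; linarith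
    calc ⌊(t + π / 2) / π⌋ ≤ ⌊t / π + 1⌋ := Int.floor_le_floor this
      _ = ⌊t / π⌋ + 1 := by exact_mod_cast Int.floor_add_one (t/π)

lemma aux_prod_div_telescope (n : ℕ) (f : ℕ → ℂ) (hf : ∀ k ≤ n, f k ≠ 0) :
    ∏ k ∈ Finset.range n, f (k + 1) / f k = f n / f 0 := by
  induction n with
  | zero => simp [div_self (hf 0 le_rfl)]
  | succ n ih =>
    rw [Finset.prod_range_succ, ih (fun k hk => hf k (hk.trans n.le_succ))]
    rw [div_mul_div_comm]
    rw [mul_comm (f n)]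
    rw [mul_div_mul_right _ _ (hf n (n.le_succ))]

lemma aux_re_pos_of_close (z : ℂ) (h : ‖z - 1‖ < 1) : 0 < z.re := by
  have h1 := Complex.abs_re_le_norm (z - 1)
  simp only [Complex.sub_re, Complex.one_re] at h1
  have := abs_lt.mp (h1.trans_lt h)
  linarith [this.1]

lemma aux_min_dist {y a b : ℝ} (hab : a ≤ b) : |min y b - min y a| ≤ b - a := by
  rcases le_total y a with h | h
  · simp [min_eq_left h, min_eq_left (h.trans hab)]; linarith
  · rcases le_total y b with h2 | h2
    · rw [min_eq_left h2, min_eq_right h, abs_of_nonneg (by linarith)]; linarith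
    · rw [min_eq_right h2, min_eq_right h, abs_of_nonneg (by linarith)]


theorem stmt_15 (r R : ℝ) (hrR : r < R) (V₁ V₂ : ℝ × ℝ → ℝ)
    (hcont : ContinuousOn (fun p => (V₁ p, V₂ p)) (Set.Icc r R ×ˢ Set.Icc r R))
    (h1r : ∀ s ∈ Set.Icc r R, 0 < V₁ (r, s))
    (h2r : ∀ t ∈ Set.Icc r R, 0 < V₂ (t, r))
    (h1R : ∀ s ∈ Set.Icc r R, V₁ (R, s) < 0)
    (h2R : ∀ t ∈ Set.Icc r R, V₂ (t, R) < 0) :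
    ∃ p : ℝ × ℝ, p.1 ∈ Set.Ioo r R ∧ p.2 ∈ Set.Ioo r R ∧ V₁ p = 0 ∧ V₂ p = 0 := by
  by_contra hno
  push_neg at hno
  set Q : Set (ℝ × ℝ) := Set.Icc r R ×ˢ Set.Icc r R with hQ
  set g : ℝ × ℝ → ℂ := fun p => (V₁ p : ℂ) + (V₂ p : ℂ) * Complex.I with hgdef
  have hre : ∀ p, (g p).re = V₁ p := by intro p; simp [hgdef]
  have him : ∀ p, (g p).im = V₂ p := by intro p; simp [hgdef]
  -- continuity
  have hV₁ : ContinuousOn V₁ Q := continuous_fst.comp_continuousOn hcont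
  have hV₂ : ContinuousOn V₂ Q := continuous_snd.comp_continuousOn hcont
  have hg : ContinuousOn g Q := by
    exact ((Complex.continuous_ofReal.comp_continuousOn hV₁).add
      (((Complex.continuous_ofReal.comp_continuousOn hV₂)).mul continuousOn_const))
  -- nonvanishing
  have hg0 : ∀ p ∈ Q, g p ≠ 0 := by
    rintro ⟨x, y⟩ hp h0
    obtain ⟨hx, hy⟩ := hp
    simp only [Set.mem_Icc] at hx hy
    have h0re : V₁ (x, y) = 0 := by rw [← hre (x, y), h0]; rfl
    have h0im : V₂ (x, y) = 0 := by rw [← him (x, y), h0]; rfl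
    rcases eq_or_lt_of_le hx.1 with h | h
    · exact absurd h0re (by rw [← h]; exact (h1r y (Set.mem_Icc.mpr hy)).ne')
    rcases eq_or_lt_of_le hx.2 with h' | h'
    · exact absurd h0re (by rw [h']; exact (h1R y (Set.mem_Icc.mpr hy)).ne)
    rcases eq_or_lt_of_le hy.1 with h2 | h2
    · exact absurd h0im (by rw [← h2]; exact (h2r x (Set.mem_Icc.mpr hx)).ne')
    rcases eq_or_lt_of_le hy.2 with h2' | h2'
    · exact absurd h0im (by rw [h2']; exact (h2R x (Set.mem_Icc.mpr hx)).ne)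
    exact hno (x, y) ⟨h, h'⟩ ⟨h2, h2'⟩ h0re h0im
  -- compactness, minimum of ‖g‖
  have hQc : IsCompact Q := isCompact_Icc.prod isCompact_Icc
  have hrr : (r, r) ∈ Q := by
    constructor <;> exact Set.mem_Icc.mpr ⟨le_rfl, hrR.le⟩
  obtain ⟨p₀, hp₀Q, hp₀min⟩ := hQc.exists_isMinOn ⟨(r, r), hrr⟩ hg.norm
  set m : ℝ := ‖g p₀‖ with hmdef
  have hm : 0 < m := norm_pos_iff.mpr (hg0 p₀ hp₀Q)
  have hmle : ∀ p ∈ Q, m ≤ ‖g p‖ := fun p hp => hp₀min hp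
  -- uniform continuity
  have huc := hQc.uniformContinuousOn_of_continuous hg
  rw [Metric.uniformContinuousOn_iff] at huc
  obtain ⟨δ, hδ, hucd⟩ := huc m hm
  -- grid
  obtain ⟨N, hN⟩ := exists_nat_gt ((R - r) / δ)
  have hN0 : 0 < (N : ℝ) := lt_of_le_of_lt (div_nonneg (by linarith) hδ.le) hN
  set st : ℝ := (R - r) / N with hstdef
  have hst0 : 0 < st := div_pos (by linarith) hN0
  have hstδ : st < δ := by
    rw [hstdef, div_lt_iff₀ hN0]
    calc R - r = ((R - r) / δ) * δ := by field_simp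
      _ < N * δ := by apply mul_lt_mul_of_pos_right hN hδ
      _ = δ * N := mul_comm _ _
  set t : ℕ → ℝ := fun k => r + k * st with htdef
  have ht0 : t 0 = r := by simp [htdef]
  have htN : t N = R := by
    rw [htdef, hstdef]; field_simp; ring
  have hts : ∀ k : ℕ, t (k + 1) - t k = st := by
    intro k; rw [htdef]; push_cast; ring
  have htmono : ∀ k : ℕ, t k ≤ t (k + 1) := by
    intro k; have := hts k; linarith
  have htmem : ∀ k ≤ N, t k ∈ Set.Icc r R := by
    intro k hk
    constructor
    · rw [htdef]; have : 0 ≤ (k : ℝ) * st := mul_nonneg (Nat.cast_nonneg k) hst0.le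
      simpa using this
    · rw [← htN]
      show r + (k : ℝ) * st ≤ r + (N : ℝ) * st
      have : (k : ℝ) ≤ N := Nat.cast_le.mpr hk
      nlinarith
  -- membership lemmas
  have hmem1 : ∀ x ∈ Set.Icc r R, ∀ k ≤ N, ((min x (t k), r) : ℝ × ℝ) ∈ Q := by
    intro x hx k hk
    refine ⟨Set.mem_Icc.mpr ⟨le_min hx.1 (htmem k hk).1, (min_le_left _ _).trans hx.2⟩,
      Set.mem_Icc.mpr ⟨le_rfl, hrR.le⟩⟩
  have hmem2 : ∀ x ∈ Set.Icc r R, ∀ y ∈ Set.Icc r R, ∀ k ≤ N, ((x, min y (t k)) : ℝ × ℝ) ∈ Q := by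
    intro x hx y hy k hk
    exact ⟨hx, Set.mem_Icc.mpr ⟨le_min hy.1 (htmem k hk).1, (min_le_left _ _).trans hy.2⟩⟩
  -- closeness of ratios
  have hclose : ∀ a ∈ Q, ∀ b ∈ Q, dist a b < δ → ‖g a / g b - 1‖ < 1 := by
    intro a ha b hb hd
    have hb0 : g b ≠ 0 := hg0 b hb
    have : g a / g b - 1 = (g a - g b) / g b := by field_simp
    rw [this, norm_div]
    rw [div_lt_one (norm_pos_iff.mpr hb0)]
    calc ‖g a - g b‖ = dist (g a) (g b) := by rw [dist_eq_norm]
      _ < m := hucd a ha b hb hd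
      _ ≤ ‖g b‖ := hmle b hb
  have hdist1 : ∀ x : ℝ, ∀ k : ℕ, dist ((min x (t (k+1)), r) : ℝ × ℝ) ((min x (t k), r) : ℝ × ℝ) < δ := by
    intro x k
    rw [Prod.dist_eq]
    simp only [Real.dist_eq]
    have hb : |min x (t (k+1)) - min x (t k)| < δ :=
      lt_of_le_of_lt (by rw [← hts k]; exact aux_min_dist (htmono k)) hstδ
    exact max_lt hb (by simpa using hδ)
  have hdist2 : ∀ x y : ℝ, ∀ k : ℕ, dist ((x, min y (t (k+1))) : ℝ × ℝ) ((x, min y (t k)) : ℝ × ℝ) < δ := by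
    intro x y k
    rw [Prod.dist_eq]
    simp only [Real.dist_eq]
    have hb : |min y (t (k+1)) - min y (t k)| < δ :=
      lt_of_le_of_lt (by rw [← hts k]; exact aux_min_dist (htmono k)) hstδ
    exact max_lt (by simpa using hδ) hb
  -- ratios are close to 1
  have hratio1 : ∀ x ∈ Set.Icc r R, ∀ k < N,
      ‖g (min x (t (k+1)), r) / g (min x (t k), r) - 1‖ < 1 := by
    intro x hx k hk
    exact hclose _ (hmem1 x hx (k+1) hk) _ (hmem1 x hx k hk.le) (hdist1 x k)
  have hratio2 : ∀ x ∈ Set.Icc r R, ∀ y ∈ Set.Icc r R, ∀ k < N,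
      ‖g (x, min y (t (k+1))) / g (x, min y (t k)) - 1‖ < 1 := by
    intro x hx y hy k hk
    exact hclose _ (hmem2 x hx y hy (k+1) hk) _ (hmem2 x hx y hy k hk.le) (hdist2 x y k)
  -- the continuous logarithm
  set θ : ℝ × ℝ → ℂ := fun p =>
    Complex.log (g (r, r))
    + ∑ k ∈ Finset.range N, Complex.log (g (min p.1 (t (k+1)), r) / g (min p.1 (t k), r))
    + ∑ k ∈ Finset.range N, Complex.log (g (p.1, min p.2 (t (k+1))) / g (p.1, min p.2 (t k)))
    with hθdef
  -- continuity of θ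
  have hcont1 : ∀ k ≤ N, ContinuousOn (fun p : ℝ × ℝ => g (min p.1 (t k), r)) Q := by
    intro k hk
    refine ContinuousOn.comp hg ?_ ?_
    · exact ((continuous_fst.min continuous_const).prodMk continuous_const).continuousOn
    · intro p hp; exact hmem1 p.1 hp.1 k hk
  have hcont2 : ∀ k ≤ N, ContinuousOn (fun p : ℝ × ℝ => g (p.1, min p.2 (t k))) Q := by
    intro k hk
    refine ContinuousOn.comp hg ?_ ?_
    · exact (continuous_fst.prodMk (continuous_snd.min continuous_const)).continuousOn
    · intro p hp; exact hmem2 p.1 hp.1 p.2 hp.2 k hk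
  have hθc : ContinuousOn θ Q := by
    rw [hθdef]
    refine (continuousOn_const.add (continuousOn_finset_sum _ ?_)).add
      (continuousOn_finset_sum _ ?_)
    · intro k hk
      rw [Finset.mem_range] at hk
      refine ContinuousOn.clog ?_ ?_
      · exact (hcont1 (k+1) hk).div (hcont1 k hk.le)
          (fun p hp => hg0 _ (hmem1 p.1 hp.1 k hk.le))
      · intro p hp
        exact Complex.mem_slitPlane_iff.mpr (Or.inl (aux_re_pos_of_close _ (hratio1 p.1 hp.1 k hk)))
    · intro k hk
      rw [Finset.mem_range] at hk
      refine ContinuousOn.clog ?_ ?_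
      · exact (hcont2 (k+1) hk).div (hcont2 k hk.le)
          (fun p hp => hg0 _ (hmem2 p.1 hp.1 p.2 hp.2 k hk.le))
      · intro p hp
        exact Complex.mem_slitPlane_iff.mpr
          (Or.inl (aux_re_pos_of_close _ (hratio2 p.1 hp.1 p.2 hp.2 k hk)))
  -- exp θ = g
  have hexp : ∀ x ∈ Set.Icc r R, ∀ y ∈ Set.Icc r R, Complex.exp (θ (x, y)) = g (x, y) := by
    intro x hx y hy
    rw [hθdef]
    simp only [Complex.exp_add, Complex.exp_sum]
    have e1 : ∀ k ∈ Finset.range N,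
        Complex.exp (Complex.log (g (min x (t (k+1)), r) / g (min x (t k), r)))
          = g (min x (t (k+1)), r) / g (min x (t k), r) := by
      intro k hk
      rw [Finset.mem_range] at hk
      exact Complex.exp_log (div_ne_zero (hg0 _ (hmem1 x hx (k+1) hk)) (hg0 _ (hmem1 x hx k hk.le)))
    have e2 : ∀ k ∈ Finset.range N,
        Complex.exp (Complex.log (g (x, min y (t (k+1))) / g (x, min y (t k))))
          = g (x, min y (t (k+1))) / g (x, min y (t k)) := by
      intro k hk
      rw [Finset.mem_range] at hk
      exact Complex.exp_log (div_ne_zero (hg0 _ (hmem2 x hx y hy (k+1) hk)) (hg0 _ (hmem2 x hx y hy k hk.le)))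
    rw [Finset.prod_congr rfl e1, Finset.prod_congr rfl e2, Complex.exp_log (hg0 _ hrr)]
    rw [aux_prod_div_telescope N (fun k => g (min x (t k), r))
      (fun k hk => hg0 _ (hmem1 x hx k hk))]
    rw [aux_prod_div_telescope N (fun k => g (x, min y (t k)))
      (fun k hk => hg0 _ (hmem2 x hx y hy k hk))]
    have hx0 : min x (t 0) = r := by rw [ht0]; exact min_eq_right hx.1
    have hxN : min x (t N) = x := by rw [htN]; exact min_eq_left hx.2
    have hy0 : min y (t 0) = r := by rw [ht0]; exact min_eq_right hy.1
    have hyN : min y (t N) = y := by rw [htN]; exact min_eq_left hy.2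
    rw [hx0, hxN, hy0, hyN]
    have n1 : g (r, r) ≠ 0 := hg0 _ hrr
    have n2 : g (x, r) ≠ 0 := hg0 _ ⟨hx, Set.mem_Icc.mpr ⟨le_rfl, hrR.le⟩⟩
    field_simp
  -- sign transfer
  have hIcc : ∀ x : ℝ, x ∈ Set.Icc r R → True := fun _ _ => trivial
  have key1 : ∀ x ∈ Set.Icc r R, ∀ y ∈ Set.Icc r R,
      V₁ (x, y) = Real.exp ((θ (x, y)).re) * Real.cos ((θ (x, y)).im) := by
    intro x hx y hy
    rw [← hre (x, y), ← hexp x hx y hy, Complex.exp_re]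
  have key2 : ∀ x ∈ Set.Icc r R, ∀ y ∈ Set.Icc r R,
      V₂ (x, y) = Real.exp ((θ (x, y)).re) * Real.sin ((θ (x, y)).im) := by
    intro x hx y hy
    rw [← him (x, y), ← hexp x hx y hy, Complex.exp_im]
  have hrmem : r ∈ Set.Icc r R := Set.mem_Icc.mpr ⟨le_rfl, hrR.le⟩
  have hRmem : R ∈ Set.Icc r R := Set.mem_Icc.mpr ⟨hrR.le, le_rfl⟩
  -- edge continuity helpers
  have hedge_b : ContinuousOn (fun x => ((θ (x, r)).im : ℝ)) (Set.Icc r R) := by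
    refine Complex.continuous_im.comp_continuousOn (ContinuousOn.comp hθc
      ((continuous_id.prodMk continuous_const).continuousOn) ?_)
    intro x hx; exact ⟨hx, hrmem⟩
  have hedge_t : ContinuousOn (fun x => ((θ (x, R)).im : ℝ)) (Set.Icc r R) := by
    refine Complex.continuous_im.comp_continuousOn (ContinuousOn.comp hθc
      ((continuous_id.prodMk continuous_const).continuousOn) ?_)
    intro x hx; exact ⟨hx, hRmem⟩
  have hedge_l : ContinuousOn (fun y => ((θ (r, y)).im : ℝ)) (Set.Icc r R) := by
    refine Complex.continuous_im.comp_continuousOn (ContinuousOn.comp hθc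
      ((continuous_const.prodMk continuous_id).continuousOn) ?_)
    intro y hy; exact ⟨hrmem, hy⟩
  have hedge_r : ContinuousOn (fun y => ((θ (R, y)).im : ℝ)) (Set.Icc r R) := by
    refine Complex.continuous_im.comp_continuousOn (ContinuousOn.comp hθc
      ((continuous_const.prodMk continuous_id).continuousOn) ?_)
    intro y hy; exact ⟨hRmem, hy⟩
  -- signs of sin/cos at points
  have hsin_pos : ∀ x ∈ Set.Icc r R, ∀ y ∈ Set.Icc r R, 0 < V₂ (x, y) →
      0 < Real.sin ((θ (x, y)).im) := by
    intro x hx y hy hv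
    rw [key2 x hx y hy] at hv
    nlinarith [Real.exp_pos ((θ (x, y)).re)]
  have hsin_neg : ∀ x ∈ Set.Icc r R, ∀ y ∈ Set.Icc r R, V₂ (x, y) < 0 →
      Real.sin ((θ (x, y)).im) < 0 := by
    intro x hx y hy hv
    rw [key2 x hx y hy] at hv
    nlinarith [Real.exp_pos ((θ (x, y)).re)]
  have hcos_pos : ∀ x ∈ Set.Icc r R, ∀ y ∈ Set.Icc r R, 0 < V₁ (x, y) →
      0 < Real.cos ((θ (x, y)).im) := by
    intro x hx y hy hv
    rw [key1 x hx y hy] at hv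
    nlinarith [Real.exp_pos ((θ (x, y)).re)]
  have hcos_neg : ∀ x ∈ Set.Icc r R, ∀ y ∈ Set.Icc r R, V₁ (x, y) < 0 →
      Real.cos ((θ (x, y)).im) < 0 := by
    intro x hx y hy hv
    rw [key1 x hx y hy] at hv
    nlinarith [Real.exp_pos ((θ (x, y)).re)]
  -- corner angles
  set A : ℝ := (θ (r, r)).im with hA
  set B : ℝ := (θ (R, r)).im with hB
  set C : ℝ := (θ (R, R)).im with hC
  set D : ℝ := (θ (r, R)).im with hD
  have pi_pos := Real.pi_pos
  -- edge floor equalities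
  have e_bottom : ⌊A / Real.pi⌋ = ⌊B / Real.pi⌋ := by
    exact aux_floor_sin hrR.le hedge_b
      (fun x hx => (hsin_pos x hx r hrmem (h2r x hx)).ne')
  have e_top : ⌊D / Real.pi⌋ = ⌊C / Real.pi⌋ := by
    exact aux_floor_sin hrR.le hedge_t
      (fun x hx => (hsin_neg x hx R hRmem (h2R x hx)).ne)
  have e_left : ⌊(A + Real.pi / 2) / Real.pi⌋ = ⌊(D + Real.pi / 2) / Real.pi⌋ := by
    refine aux_floor_sin hrR.le (hedge_l.add continuousOn_const) ?_
    intro y hy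
    simp only [Pi.add_apply]
    rw [Real.sin_add_pi_div_two]
    exact (hcos_pos r hrmem y hy (h1r y hy)).ne'
  have e_right : ⌊(B + Real.pi / 2) / Real.pi⌋ = ⌊(C + Real.pi / 2) / Real.pi⌋ := by
    refine aux_floor_sin hrR.le (hedge_r.add continuousOn_const) ?_
    intro y hy
    simp only [Pi.add_apply]
    rw [Real.sin_add_pi_div_two]
    exact (hcos_neg R hRmem y hy (h1R y hy)).ne
  -- corner parities
  have pA_s : Even ⌊A / Real.pi⌋ :=
    aux_even_floor_of_sin_pos (hsin_pos r hrmem r hrmem (h2r r hrmem))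
  have pA_c : Even ⌊(A + Real.pi / 2) / Real.pi⌋ := by
    refine aux_even_floor_of_sin_pos ?_
    rw [Real.sin_add_pi_div_two]
    exact hcos_pos r hrmem r hrmem (h1r r hrmem)
  have pB_s : Even ⌊B / Real.pi⌋ :=
    aux_even_floor_of_sin_pos (hsin_pos R hRmem r hrmem (h2r R hRmem))
  have pB_c : Odd ⌊(B + Real.pi / 2) / Real.pi⌋ := by
    refine aux_odd_floor_of_sin_neg ?_
    rw [Real.sin_add_pi_div_two]
    exact hcos_neg R hRmem r hrmem (h1R r hrmem)
  have pC_s : Odd ⌊C / Real.pi⌋ :=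
    aux_odd_floor_of_sin_neg (hsin_neg R hRmem R hRmem (h2R R hRmem))
  have pC_c : Odd ⌊(C + Real.pi / 2) / Real.pi⌋ := by
    refine aux_odd_floor_of_sin_neg ?_
    rw [Real.sin_add_pi_div_two]
    exact hcos_neg R hRmem R hRmem (h1R R hRmem)
  have pD_s : Odd ⌊D / Real.pi⌋ :=
    aux_odd_floor_of_sin_neg (hsin_neg r hrmem R hRmem (h2R r hrmem))
  have pD_c : Even ⌊(D + Real.pi / 2) / Real.pi⌋ := by
    refine aux_even_floor_of_sin_pos ?_
    rw [Real.sin_add_pi_div_two]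
    exact hcos_pos r hrmem R hRmem (h1r R hRmem)
  -- bounds
  have bA := aux_floor_half_bounds A
  have bB := aux_floor_half_bounds B
  have bC := aux_floor_half_bounds C
  have bD := aux_floor_half_bounds D
  -- integer contradiction
  rw [Int.even_iff] at pA_s pA_c pB_s pD_c
  rw [Int.odd_iff] at pB_c pC_s pC_c pD_s
  omega
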